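/- If the monoid presentation ⟨G | u_i = v_i (i < m)⟩ does not prove u = v, then the theory T is rigid: for every linear-regular term t(x1,...,xn) of T and every permutation σ of {1,...,n}, if T ⊢ t(x1,...,xn) = t(x_{σ(1)},...,x_{σ(n)}) then σ is the identity. -/

import Mathlib

/-- Terms of the theory `T`: unary symbols `g x` for each letter `x` of the alphabet `Fin N`,
an extra unary symbol `al` (written α), and a binary symbol `m`, in context `x_1, ..., x_n`. -/
inductive TmT (N : ℕ) : ℕ → Type
  | var {n} : Fin n → TmT N n
  | g {n} : Fin N → TmT N n → TmT N n
  | al {n} : TmT N n → TmT N n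
  | m {n} : TmT N n → TmT N n → TmT N n

/-- A word `w` over the alphabet applied to a term as a composite of unary symbols. -/
def wApp {N n : ℕ} (w : List (Fin N)) (t : TmT N n) : TmT N n :=
  w.foldr (fun x s => TmT.g x s) t

/-- Equational provability in the theory `T` with axioms `u_i(x1) = v_i(x1)` (for `i : Fin M`,
where `u_i = ur i`, `v_i = vr i`) and `m(uα(x1), x2) = m(vα(x2), x1)`, closed under
all substitution instances and congruence. -/
inductive ProvT {N : ℕ} (M : ℕ) (ur vr : Fin M → List (Fin N)) (u v : List (Fin N)) :
    {n : ℕ} → TmT N n → TmT N n → Prop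
  | refl {n} (t : TmT N n) : ProvT M ur vr u v t t
  | symm {n} {s t : TmT N n} : ProvT M ur vr u v s t → ProvT M ur vr u v t s
  | trans {n} {s t w : TmT N n} :
      ProvT M ur vr u v s t → ProvT M ur vr u v t w → ProvT M ur vr u v s w
  | congg {n} (x : Fin N) {s t : TmT N n} :
      ProvT M ur vr u v s t → ProvT M ur vr u v (.g x s) (.g x t)
  | congal {n} {s t : TmT N n} : ProvT M ur vr u v s t → ProvT M ur vr u v (.al s) (.al t)
  | congm {n} {a a' b b' : TmT N n} : ProvT M ur vr u v a a' → ProvT M ur vr u v b b' →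
      ProvT M ur vr u v (.m a b) (.m a' b')
  | axu {n} (i : Fin M) (t : TmT N n) : ProvT M ur vr u v (wApp (ur i) t) (wApp (vr i) t)
  | axm {n} (t₁ t₂ : TmT N n) :
      ProvT M ur vr u v (.m (wApp u (.al t₁)) t₂) (.m (wApp v (.al t₂)) t₁)

/-- Provability of word equations from the monoid presentation
`⟨ Fin N | ur i = vr i (i : Fin M) ⟩`: the congruence on the free monoid of words
over `Fin N` generated by the relations. -/
inductive MonProv {N M : ℕ} (ur vr : Fin M → List (Fin N)) :
    List (Fin N) → List (Fin N) → Prop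
  | of (i : Fin M) : MonProv ur vr (ur i) (vr i)
  | refl (w : List (Fin N)) : MonProv ur vr w w
  | symm {a b} : MonProv ur vr a b → MonProv ur vr b a
  | trans {a b c} : MonProv ur vr a b → MonProv ur vr b c → MonProv ur vr a c
  | mul {a b c d} : MonProv ur vr a b → MonProv ur vr c d → MonProv ur vr (a ++ c) (b ++ d)

/-- The left-to-right list of variable occurrences of a term of `T`. -/
def varListT {N n : ℕ} : TmT N n → List (Fin n)
  | .var i => [i]
  | .g _ t => varListT t
  | .al t => varListT t
  | .m a b => varListT a ++ varListT b

/-- A term of `T` in context `x_1, ..., x_n` is linear-regular if every variable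
occurs exactly once. -/
def LinRegT {N n : ℕ} (t : TmT N n) : Prop := ∀ i : Fin n, (varListT t).count i = 1

/-- Substitution of variables along a map of variables (`t(x_{σ(1)},...,x_{σ(n)})`). -/
def renameT {N n : ℕ} (σ : Fin n → Fin n) : TmT N n → TmT N n
  | .var i => .var (σ i)
  | .g x t => .g x (renameT σ t)
  | .al t => .al (renameT σ t)
  | .m a b => .m (renameT σ a) (renameT σ b)

/-- The theory `T` is rigid: no linear-regular term is provably equal to a nontrivial
permutation of its variables. -/
def RigidT {N : ℕ} (M : ℕ) (ur vr : Fin M → List (Fin N)) (u v : List (Fin N)) : Prop :=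
  ∀ (n : ℕ) (t : TmT N n), LinRegT t → ∀ σ : Equiv.Perm (Fin n),
    ProvT M ur vr u v t (renameT σ t) → σ = 1

section RigidAux

variable {N M : ℕ}

open Classical

/-- The setoid of words generated by the monoid presentation. -/
def monSetoid (ur vr : Fin M → List (Fin N)) : Setoid (List (Fin N)) :=
  ⟨MonProv ur vr, ⟨MonProv.refl, MonProv.symm, MonProv.trans⟩⟩

/-- Quotient of words by the presentation. -/
def WQ (ur vr : Fin M → List (Fin N)) : Type := Quotient (monSetoid ur vr)

def WQ.mk (ur vr : Fin M → List (Fin N)) (w : List (Fin N)) : WQ ur vr :=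
  Quotient.mk (monSetoid ur vr) w

/-- Left multiplication by a word on the quotient. -/
def mulW (ur vr : Fin M → List (Fin N)) (w : List (Fin N)) : WQ ur vr → WQ ur vr :=
  Quotient.map (fun a => w ++ a) (fun _ _ h => MonProv.mul (MonProv.refl w) h)

/-- Labeled value trees: variables, α-nodes and m-nodes, each carrying a word-class label. -/
inductive Val (Q : Type) (n : ℕ) : Type
  | var : Q → Fin n → Val Q n
  | al : Q → Val Q n → Val Q n
  | m : Q → Val Q n → Val Q n → Val Q n

variable {Q : Type} {n : ℕ}

/-- Apply a function to the top label. -/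
def addL (f : Q → Q) : Val Q n → Val Q n
  | .var q i => .var (f q) i
  | .al q w => .al (f q) w
  | .m q a b => .m (f q) a b

open Classical in
/-- Canonical interpretation of the binary symbol `m`, orienting the swap axiom. -/
noncomputable def mEval (one qu qv : Q) : Val Q n → Val Q n → Val Q n
  | .var q i, b => .m one (.var q i) b
  | .al q s, b => if q = qu then .m one (.al qv b) s else .m one (.al q s) b
  | .m q x y, b => .m one (.m q x y) b

/-- Evaluation of terms into the value algebra. -/
noncomputable def evalT (ur vr : Fin M → List (Fin N)) (u v : List (Fin N)) :
    TmT N n → Val (WQ ur vr) n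
  | .var i => .var (WQ.mk ur vr []) i
  | .g x t => addL (mulW ur vr [x]) (evalT ur vr u v t)
  | .al t => .al (WQ.mk ur vr []) (evalT ur vr u v t)
  | .m a b => mEval (WQ.mk ur vr []) (WQ.mk ur vr u) (WQ.mk ur vr v)
      (evalT ur vr u v a) (evalT ur vr u v b)

lemma addL_ext {f g : Q → Q} (h : ∀ q, f q = g q) (x : Val Q n) : addL f x = addL g x := by
  cases x <;> simp [addL, h]

lemma addL_addL (f g : Q → Q) (x : Val Q n) : addL f (addL g x) = addL (fun q => f (g q)) x := by
  cases x <;> simp [addL]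

lemma addL_id (f : Q → Q) (h : ∀ q, f q = q) (x : Val Q n) : addL f x = x := by
  cases x <;> simp [addL, h]

lemma eval_wApp (ur vr : Fin M → List (Fin N)) (u v : List (Fin N)) (w : List (Fin N))
    (t : TmT N n) : evalT ur vr u v (wApp w t) = addL (mulW ur vr w) (evalT ur vr u v t) := by
  induction w with
  | nil =>
    rw [show wApp [] t = t from rfl, addL_id]
    intro q
    induction q using Quotient.ind
    rfl
  | cons x w ih =>
    rw [show wApp (x :: w) t = .g x (wApp w t) from rfl]
    rw [show evalT ur vr u v (TmT.g x (wApp w t))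
        = addL (mulW ur vr [x]) (evalT ur vr u v (wApp w t)) from rfl, ih, addL_addL]
    apply addL_ext
    intro q
    induction q using Quotient.ind
    apply Quotient.sound
    simp [monSetoid]

lemma eval_invariant (ur vr : Fin M → List (Fin N)) (u v : List (Fin N))
    (h : ¬ MonProv ur vr u v) {s t : TmT N n}
    (hp : ProvT M ur vr u v s t) : evalT ur vr u v s = evalT ur vr u v t := by
  induction hp with
  | refl t => rfl
  | symm _ ih => exact ih.symm
  | trans _ _ ih1 ih2 => exact ih1.trans ih2
  | congg x _ ih => show addL _ _ = addL _ _; rw [ih]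
  | congal _ ih => show Val.al _ _ = Val.al _ _; rw [ih]
  | congm _ _ ih1 ih2 => show mEval _ _ _ _ _ = mEval _ _ _ _ _; rw [ih1, ih2]
  | axu i t =>
    rw [eval_wApp, eval_wApp]
    apply addL_ext
    intro q
    induction q using Quotient.ind
    exact Quotient.sound (MonProv.mul (MonProv.of i) (MonProv.refl _))
  | axm t₁ t₂ =>
    show mEval _ _ _ (evalT ur vr u v (wApp u (.al t₁))) _
        = mEval _ _ _ (evalT ur vr u v (wApp v (.al t₂))) _
    rw [eval_wApp, eval_wApp]
    show mEval _ _ _ (Val.al (mulW ur vr u (WQ.mk ur vr [])) _) _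
        = mEval _ _ _ (Val.al (mulW ur vr v (WQ.mk ur vr [])) _) _
    have hu : mulW ur vr u (WQ.mk ur vr []) = WQ.mk ur vr u := by
      apply Quotient.sound
      show MonProv ur vr (u ++ []) u
      rw [List.append_nil]; exact MonProv.refl u
    have hv : mulW ur vr v (WQ.mk ur vr []) = WQ.mk ur vr v := by
      apply Quotient.sound
      show MonProv ur vr (v ++ []) v
      rw [List.append_nil]; exact MonProv.refl v
    rw [hu, hv]
    show (if WQ.mk ur vr u = WQ.mk ur vr u then _ else _)
        = (if WQ.mk ur vr v = WQ.mk ur vr u then _ else _)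
    rw [if_pos rfl, if_neg]
    intro hvu
    exact h (MonProv.symm (Quotient.exact hvu))

/-- Rename variables in a value tree. -/
def mapVal (σ : Fin n → Fin n) : Val Q n → Val Q n
  | .var q i => .var q (σ i)
  | .al q w => .al q (mapVal σ w)
  | .m q a b => .m q (mapVal σ a) (mapVal σ b)

lemma mapVal_addL (σ : Fin n → Fin n) (f : Q → Q) (x : Val Q n) :
    mapVal σ (addL f x) = addL f (mapVal σ x) := by
  cases x <;> simp [addL, mapVal]

lemma mapVal_mEval (σ : Fin n → Fin n) (one qu qv : Q) (a b : Val Q n) :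
    mapVal σ (mEval one qu qv a b) = mEval one qu qv (mapVal σ a) (mapVal σ b) := by
  cases a with
  | var q i => rfl
  | al q s =>
    show mapVal σ (if q = qu then _ else _) = (if q = qu then _ else _)
    by_cases hq : q = qu <;> simp [hq, mapVal]
  | m q x y => rfl

lemma eval_rename (ur vr : Fin M → List (Fin N)) (u v : List (Fin N))
    (σ : Fin n → Fin n) (t : TmT N n) :
    evalT ur vr u v (renameT σ t) = mapVal σ (evalT ur vr u v t) := by
  induction t with
  | var i => rfl
  | g x t ih =>
    show addL _ _ = mapVal σ (addL _ _)
    rw [mapVal_addL, ih]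
  | al t ih =>
    show Val.al _ _ = mapVal σ (Val.al _ _)
    rw [show mapVal σ (Val.al (WQ.mk ur vr []) (evalT ur vr u v t))
        = Val.al (WQ.mk ur vr []) (mapVal σ (evalT ur vr u v t)) from rfl, ih]
  | m a b iha ihb =>
    show mEval _ _ _ _ _ = mapVal σ (mEval _ _ _ _ _)
    rw [mapVal_mEval, iha, ihb]

/-- Variable occurrence list of a value tree. -/
def varListV : Val Q n → List (Fin n)
  | .var _ i => [i]
  | .al _ w => varListV w
  | .m _ a b => varListV a ++ varListV b

lemma varListV_addL (f : Q → Q) (x : Val Q n) : varListV (addL f x) = varListV x := by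
  cases x <;> simp [addL, varListV]

lemma mem_varListV_mEval (one qu qv : Q) (a b : Val Q n) (i : Fin n) :
    i ∈ varListV (mEval one qu qv a b) ↔ i ∈ varListV a ∨ i ∈ varListV b := by
  cases a with
  | var q j => simp [mEval, varListV]
  | al q s =>
    show i ∈ varListV (if q = qu then _ else _) ↔ _
    by_cases hq : q = qu <;> simp [hq, varListV] <;> tauto
  | m q x y => simp [mEval, varListV, or_assoc]

lemma mem_varListV_eval (ur vr : Fin M → List (Fin N)) (u v : List (Fin N))
    (t : TmT N n) (i : Fin n) (hi : i ∈ varListT t) :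
    i ∈ varListV (evalT ur vr u v t) := by
  induction t with
  | var j => exact hi
  | g x t ih =>
    show i ∈ varListV (addL _ _)
    rw [varListV_addL]
    exact ih hi
  | al t ih => exact ih hi
  | m a b iha ihb =>
    show i ∈ varListV (mEval _ _ _ _ _)
    rw [mem_varListV_mEval]
    rcases List.mem_append.mp hi with h' | h'
    · exact Or.inl (iha h')
    · exact Or.inr (ihb h')

lemma varListV_mapVal (σ : Fin n → Fin n) (x : Val Q n) :
    varListV (mapVal σ x) = (varListV x).map σ := by
  induction x <;> simp [mapVal, varListV, *]

lemma fix_of_eq_map {β : Type*} (σ : β → β) :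
    ∀ (L : List β), L = L.map σ → ∀ j ∈ L, σ j = j := by
  intro L
  induction L with
  | nil => intro _ j hj; simp at hj
  | cons a L ih =>
    intro hL j hj
    simp only [List.map_cons, List.cons.injEq] at hL
    rcases List.mem_cons.mp hj with rfl | hj
    · exact hL.1.symm
    · exact ih hL.2 j hj

end RigidAux

/-- If the monoid presentation does not prove `u = v`, then `T` is
rigid: every linear-regular term provably equal in `T` to a permuted version of itself
forces the permutation to be the identity. -/
theorem rigid_of_not_word_problem {N M : ℕ} (ur vr : Fin M → List (Fin N))
    (u v : List (Fin N)) (h : ¬ MonProv ur vr u v) :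
    RigidT M ur vr u v := by
  intro n t ht σ hp
  have h1 : evalT ur vr u v t = mapVal (⇑σ) (evalT ur vr u v t) := by
    have := eval_invariant ur vr u v h hp
    rwa [eval_rename] at this
  have h2 : varListV (evalT ur vr u v t)
      = (varListV (evalT ur vr u v t)).map σ := by
    conv_lhs => rw [h1]
    rw [varListV_mapVal]
  apply Equiv.ext
  intro i
  have hi : i ∈ varListT t := by
    have h0 := ht i
    exact List.count_pos_iff.mp (by omega)
  exact fix_of_eq_map σ _ h2 i (mem_varListV_eval ur vr u v t i hi)
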